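/- For probability distributions p and q on a finite set S with q(s) > 0 for all s and p(s) = f(s)q(s)/Z for a strictly positive function f with Z = ∑_s f(s)q(s), the dynamic range γ = (max_s f(s))/(min_s f(s)) satisfies γ ≥ B(p,q)^{-4}, where B(p,q) = ∑_s √(p(s)q(s)) is the Bhattacharyya coefficient. -/
import Mathlib


open Finset

theorem dynamic_range_bhattacharyya_bound
    {S : Type*} [Fintype S] [Nonempty S]
    (p q f : S → ℝ) (Z : ℝ)
    (hp0 : ∀ s, 0 ≤ p s) (hp1 : ∑ s, p s = 1)
    (hq0 : ∀ s, 0 < q s) (hq1 : ∑ s, q s = 1)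
    (hf : ∀ s, 0 < f s)
    (hZ : Z = ∑ s, f s * q s)
    (hpf : ∀ s, p s = f s * q s / Z) :
    (∑ s, Real.sqrt (p s * q s))⁻¹ ^ 4 ≤
      (univ.sup' univ_nonempty f) / (univ.inf' univ_nonempty f) := by
  have hS : (univ : Finset S).Nonempty := univ_nonempty
  set m := univ.inf' univ_nonempty f with hm
  set M := univ.sup' univ_nonempty f with hM
  have hm0 : 0 < m := (Finset.lt_inf'_iff hS).2 (fun b _ => hf b)
  have hle : ∀ s : S, m ≤ f s ∧ f s ≤ M := fun s =>
    ⟨Finset.inf'_le f (mem_univ s), Finset.le_sup' f (mem_univ s)⟩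
  obtain ⟨s₀⟩ := ‹Nonempty S›
  have hM0 : 0 < M := lt_of_lt_of_le (hf s₀) (hle s₀).2
  have hZ0 : 0 < Z := by
    rw [hZ]; exact Finset.sum_pos (fun s _ => mul_pos (hf s) (hq0 s)) hS
  have hZM : Z ≤ M := by
    calc Z = ∑ s, f s * q s := hZ
    _ ≤ ∑ s, M * q s := Finset.sum_le_sum
        (fun s _ => mul_le_mul_of_nonneg_right (hle s).2 (hq0 s).le)
    _ = M := by rw [← Finset.mul_sum, hq1, mul_one]
  set B := ∑ s, Real.sqrt (p s * q s) with hB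
  set A := ∑ s, q s * Real.sqrt (f s) with hA
  have hBA : B = A / Real.sqrt Z := by
    rw [hB, hA, Finset.sum_div]
    refine Finset.sum_congr rfl (fun s _ => ?_)
    rw [hpf s, show f s * q s / Z * q s = (q s) ^ 2 * (f s / Z) by ring,
      Real.sqrt_mul (sq_nonneg _), Real.sqrt_sq (hq0 s).le,
      Real.sqrt_div (hf s).le, mul_div_assoc]
  have hA1 : Real.sqrt m ≤ A := by
    calc Real.sqrt m = ∑ s, q s * Real.sqrt m := by
          rw [← Finset.sum_mul, hq1, one_mul]
    _ ≤ A := Finset.sum_le_sum (fun s _ =>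
        mul_le_mul_of_nonneg_left (Real.sqrt_le_sqrt (hle s).1) (hq0 s).le)
  have hA2 : Z / Real.sqrt M ≤ A := by
    have key : ∀ s : S, f s / Real.sqrt M ≤ Real.sqrt (f s) := by
      intro s
      rw [div_le_iff₀ (Real.sqrt_pos.2 hM0)]
      calc f s = Real.sqrt (f s) * Real.sqrt (f s) :=
            (Real.mul_self_sqrt (hf s).le).symm
      _ ≤ Real.sqrt (f s) * Real.sqrt M :=
            mul_le_mul_of_nonneg_left (Real.sqrt_le_sqrt (hle s).2) (Real.sqrt_nonneg _)
    calc Z / Real.sqrt M = ∑ s, q s * (f s / Real.sqrt M) := by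
          rw [hZ, Finset.sum_div]
          exact Finset.sum_congr rfl (fun s _ => by ring)
    _ ≤ A := Finset.sum_le_sum (fun s _ =>
        mul_le_mul_of_nonneg_left (key s) (hq0 s).le)
  have hsZ : 0 < Real.sqrt Z := Real.sqrt_pos.2 hZ0
  have hB1 : Real.sqrt m / Real.sqrt Z ≤ B := by
    rw [hBA]; exact div_le_div_of_nonneg_right hA1 hsZ.le
  have hB2 : Real.sqrt Z / Real.sqrt M ≤ B := by
    rw [hBA]
    have : Real.sqrt Z / Real.sqrt M = (Z / Real.sqrt M) / Real.sqrt Z := by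
      rw [div_div, mul_comm, ← div_div, Real.div_sqrt]
    rw [this]
    exact div_le_div_of_nonneg_right hA2 hsZ.le
  have hB0 : 0 < B :=
    lt_of_lt_of_le (div_pos (Real.sqrt_pos.2 hm0) hsZ) hB1
  have hBsq : Real.sqrt m / Real.sqrt M ≤ B ^ 2 := by
    calc Real.sqrt m / Real.sqrt M
        = (Real.sqrt m / Real.sqrt Z) * (Real.sqrt Z / Real.sqrt M) := by
          field_simp
    _ ≤ B * B := mul_le_mul hB1 hB2
        (div_nonneg hsZ.le (Real.sqrt_nonneg _))
        hB0.le
    _ = B ^ 2 := (sq B).symm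
  have hB4 : m / M ≤ B ^ 4 := by
    calc m / M = (Real.sqrt m / Real.sqrt M) ^ 2 := by
          rw [div_pow, Real.sq_sqrt hm0.le, Real.sq_sqrt hM0.le]
    _ ≤ (B ^ 2) ^ 2 := by
          apply pow_le_pow_left₀ (div_nonneg (Real.sqrt_nonneg _) (Real.sqrt_nonneg _)) hBsq
    _ = B ^ 4 := by ring
  calc B⁻¹ ^ 4 = (B ^ 4)⁻¹ := by rw [inv_pow]
  _ ≤ (m / M)⁻¹ := by
      apply inv_anti₀ (div_pos hm0 hM0) hB4
  _ = M / m := by rw [inv_div]
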